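/- For every x ∈ ℝ, ∫₀^{2π} sin φ · σ(x·cos φ + sin φ) dφ = π/2, where σ(z) = max(z, 0) is the ReLU function. -/
import Mathlib


open MeasureTheory Real Set Filter

/-- `∫₀^{2π} sin φ · σ(x cos φ + sin φ) dφ = π/2`,
where `σ(z) = max z 0` is the ReLU function. -/
theorem statement4 (x : ℝ) :
    ∫ φ in (0:ℝ)..(2 * Real.pi),
        Real.sin φ * max (x * Real.cos φ + Real.sin φ) 0
      = Real.pi / 2 := by
  have hg_cont : Continuous (fun φ => Real.sin φ * |x * Real.cos φ + Real.sin φ|) := by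
    fun_prop
  have hg0 : (∫ φ in (0:ℝ)..(2*Real.pi), Real.sin φ * |x * Real.cos φ + Real.sin φ|) = 0 := by
    have hsplit := intervalIntegral.integral_add_adjacent_intervals
      (μ := volume) (a := (0:ℝ)) (b := Real.pi) (c := 2*Real.pi)
      (hg_cont.intervalIntegrable _ _) (hg_cont.intervalIntegrable _ _)
    have hshift : (∫ φ in Real.pi..(2*Real.pi), Real.sin φ * |x * Real.cos φ + Real.sin φ|)
        = ∫ φ in (0:ℝ)..Real.pi,
            Real.sin (φ + Real.pi) * |x * Real.cos (φ + Real.pi) + Real.sin (φ + Real.pi)| := by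
      rw [intervalIntegral.integral_comp_add_right
        (fun φ => Real.sin φ * |x * Real.cos φ + Real.sin φ|) Real.pi]
      norm_num [two_mul]
    have hneg : ∀ φ : ℝ,
        Real.sin (φ + Real.pi) * |x * Real.cos (φ + Real.pi) + Real.sin (φ + Real.pi)|
        = -(Real.sin φ * |x * Real.cos φ + Real.sin φ|) := by
      intro φ
      rw [Real.sin_add_pi, Real.cos_add_pi,
        show x * -Real.cos φ + -Real.sin φ = -(x * Real.cos φ + Real.sin φ) by ring, abs_neg]
      ring
    rw [← hsplit, hshift]
    simp only [hneg]
    rw [intervalIntegral.integral_neg]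
    ring
  have heq : ∀ φ : ℝ, Real.sin φ * max (x * Real.cos φ + Real.sin φ) 0
      = (Real.sin φ * (x * Real.cos φ + Real.sin φ)
          + Real.sin φ * |x * Real.cos φ + Real.sin φ|) / 2 := by
    intro φ
    rcases le_or_gt 0 (x * Real.cos φ + Real.sin φ) with h | h
    · rw [max_eq_left h, abs_of_nonneg h]; ring
    · rw [max_eq_right h.le, abs_of_neg h]; ring
  simp only [heq]
  rw [intervalIntegral.integral_div,
    intervalIntegral.integral_add (Continuous.intervalIntegrable (by fun_prop) _ _) (hg_cont.intervalIntegrable _ _), hg0]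
  have h1 : (∫ φ in (0:ℝ)..(2*Real.pi), Real.sin φ * (x * Real.cos φ + Real.sin φ))
      = Real.pi := by
    have : (fun φ => Real.sin φ * (x * Real.cos φ + Real.sin φ))
        = fun φ => x * (Real.sin φ * Real.cos φ) + Real.sin φ ^ 2 := by
      funext φ; ring
    rw [this, intervalIntegral.integral_add (Continuous.intervalIntegrable (by fun_prop) _ _) (Continuous.intervalIntegrable (by fun_prop) _ _),
      intervalIntegral.integral_const_mul, integral_sin_mul_cos₁, integral_sin_sq]
    simp [Real.sin_two_pi, Real.cos_two_pi]
  rw [h1]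
  ring
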